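/- Let q be a positive rational and let n ≥ 2 be such that α = q^{1/n} satisfies that α, α², …, α^{n−1} are all irrational. Then the polynomial X^n − q is irreducible over ℚ. -/

import Mathlib

open Polynomial

/-- Key lemma: if `f` is a monic factor of `X^n - C q` over `ℚ`, then
`α ^ f.natDegree = |f.coeff 0|`, where `α` is the positive real `n`-th root of `q`. -/
lemma key_abs_coeff (q : ℚ) (hq : 0 < q) (n : ℕ) (hn0 : n ≠ 0) (α : ℝ)
    (hαpos : 0 < α) (hroot : α ^ n = (q : ℝ))
    (f : Polynomial ℚ) (hf : f.Monic) (hdvd : f ∣ X ^ n - C q) :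
    α ^ f.natDegree = |(f.coeff 0 : ℝ)| := by
  set F : Polynomial ℂ := f.map (algebraMap ℚ ℂ) with hF
  have hFmonic : F.Monic := hf.map _
  have hFsplits : F.Splits := IsAlgClosed.splits F
  -- every complex root of F has absolute value α
  have habs : ∀ r ∈ F.roots, ‖r‖ = α := by
    intro r hr
    have hrroot : F.IsRoot r := isRoot_of_mem_roots hr
    obtain ⟨g, hg⟩ := hdvd
    have hrn : r ^ n = (q : ℂ) := by
      have h0 : ((X ^ n - C q : Polynomial ℚ).map (algebraMap ℚ ℂ)).eval r = 0 := by
        rw [hg, Polynomial.map_mul, eval_mul, show F.eval r = 0 from hrroot, zero_mul]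
      simpa [sub_eq_zero] using h0
    have h1 : ‖r‖ ^ n = α ^ n := by
      rw [← norm_pow, hrn, hroot]
      rw [show ((q : ℂ)) = ((q : ℝ) : ℂ) by push_cast; ring, Complex.norm_real, Real.norm_eq_abs,
        abs_of_pos (by exact_mod_cast hq)]
    exact (pow_left_inj₀ (norm_nonneg _) hαpos.le hn0).mp h1
  have hcard : Multiset.card F.roots = f.natDegree := by
    rw [splits_iff_card_roots.mp hFsplits, hF, natDegree_map]
  -- compute |coeff 0| of F
  have hprod : F = (F.roots.map fun r => X - C r).prod :=
    hFsplits.eq_prod_roots_of_monic hFmonic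
  have heval : F.coeff 0 = (F.roots.map fun r => -r).prod := by
    rw [coeff_zero_eq_eval_zero, hprod]
    rw [Polynomial.eval_multiset_prod]
    rw [Multiset.map_map]
    simp
  have habsprod : ‖F.coeff 0‖ = α ^ f.natDegree := by
    rw [heval, ← hcard]
    rw [show ‖(F.roots.map fun r => -r).prod‖
        = ((F.roots.map fun r => -r).map fun x => ‖x‖).prod from
      map_multiset_prod (normHom : ℂ →*₀ ℝ) _]
    rw [Multiset.map_map]
    have : ∀ r ∈ F.roots, ((fun x : ℂ => ‖x‖) ∘ fun r => -r) r = α := by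
      intro r hr; simpa using habs r hr
    rw [Multiset.map_congr rfl this, Multiset.map_const', Multiset.prod_replicate]
  have hc0 : F.coeff 0 = ((f.coeff 0 : ℝ) : ℂ) := by
    rw [hF, coeff_map, eq_ratCast]
    norm_cast
  rw [← habsprod, hc0, Complex.norm_real, Real.norm_eq_abs]

/-- If `α = q^{1/n}` is a positive irreducible `n`-th root of a positive rational `q`
(i.e. `α, α², …, α^{n-1}` are all irrational), then `X^n - q` is irreducible over `ℚ`. -/
theorem stmt_4 (q : ℚ) (hq : 0 < q) (n : ℕ) (hn : 2 ≤ n) (α : ℝ)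
    (hαpos : 0 < α) (hroot : α ^ n = (q : ℝ))
    (hirr : ∀ i, 1 ≤ i → i < n → Irrational (α ^ i)) :
    Irreducible (Polynomial.X ^ n - Polynomial.C q) := by
  have hn0 : n ≠ 0 := by omega
  set p : Polynomial ℚ := X ^ n - C q with hp
  have hpne : p ≠ 0 := X_pow_sub_C_ne_zero (by omega) q
  have hpnu : ¬ IsUnit p := by
    rw [Polynomial.isUnit_iff_degree_eq_zero, degree_X_pow_sub_C (by omega : 0 < n)]
    exact_mod_cast hn0
  by_contra hI
  obtain ⟨g, hgirr, hgdvd⟩ := WfDvdMonoid.exists_irreducible_factor hpnu hpne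
  have hd1 : 1 ≤ g.natDegree := hgirr.natDegree_pos
  have hdn : g.natDegree ≤ n := by
    have := natDegree_le_of_dvd hgdvd hpne
    rwa [hp, natDegree_X_pow_sub_C] at this
  have hdlt : g.natDegree < n := by
    rcases lt_or_eq_of_le hdn with h | h
    · exact h
    · exfalso
      exact hI ((associated_of_dvd_of_natDegree_le hgdvd hpne
        (by rw [hp, natDegree_X_pow_sub_C, h])).irreducible hgirr)
  -- make g monic
  set m : Polynomial ℚ := g * C g.leadingCoeff⁻¹ with hm
  have hgne : g ≠ 0 := hgirr.ne_zero
  have hmmonic : m.Monic := monic_mul_leadingCoeff_inv hgne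
  have hmdeg : m.natDegree = g.natDegree := by
    rw [hm, natDegree_mul_C (inv_ne_zero (leadingCoeff_ne_zero.mpr hgne))]
  have hmg : m ∣ g := ⟨C g.leadingCoeff, by
    rw [hm, mul_assoc, ← C_mul, inv_mul_cancel₀ (leadingCoeff_ne_zero.mpr hgne), C_1, mul_one]⟩
  have hmdvd : m ∣ p := hmg.trans hgdvd
  have := key_abs_coeff q hq n hn0 α hαpos hroot m hmmonic hmdvd
  rw [hmdeg] at this
  have : α ^ g.natDegree = ((|m.coeff 0| : ℚ) : ℝ) := by
    rw [this]; push_cast; ring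
  exact (hirr g.natDegree hd1 hdlt) ⟨|m.coeff 0|, this.symm⟩
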